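/- For every real number x > 1 one has 2/(1+x) + log(x/(1+x)) > 0; that is, the derivative of the function s(x) = x·log(x) − (x−1)·log(x+1) is strictly positive on (1, ∞), so s is strictly increasing on (1, ∞). -/

import Mathlib

lemma key_pos (x : ℝ) (hx : 1 < x) :
    2 / (1 + x) + Real.log (x / (1 + x)) > 0 := by
  have hx0 : 0 < x := by linarith
  have hx1 : 0 < 1 + x := by linarith
  have hne : (1 + x) / x ≠ 1 := by
    intro h
    have := (div_eq_one_iff_eq (ne_of_gt hx0)).mp h
    linarith
  have hlt : Real.log ((1 + x) / x) < (1 + x) / x - 1 :=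
    Real.log_lt_sub_one_of_pos (by positivity) hne
  have hlog : Real.log (x / (1 + x)) = - Real.log ((1 + x) / x) := by
    rw [← Real.log_inv, inv_div]
  have h2 : (1 + x) / x - 1 = 1 / x := by field_simp; ring
  have h3 : 2 / (1 + x) - 1 / x > 0 := by
    rw [gt_iff_lt, sub_pos, div_lt_div_iff₀ hx0 hx1]
    nlinarith
  rw [hlog]
  linarith [hlt, h2 ▸ hlt]

lemma hderiv (x : ℝ) (hx : 1 < x) :
    HasDerivAt (fun x : ℝ => x * Real.log x - (x - 1) * Real.log (x + 1))
      (2 / (1 + x) + Real.log (x / (1 + x))) x := by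
  have hx0 : 0 < x := by linarith
  have hx1 : x + 1 ≠ 0 := by linarith
  have h1 : HasDerivAt (fun x : ℝ => x * Real.log x) (1 * Real.log x + x * x⁻¹) x :=
    (hasDerivAt_id' x).mul (Real.hasDerivAt_log (ne_of_gt hx0))
  have h2 : HasDerivAt (fun x : ℝ => (x - 1) * Real.log (x + 1))
      (1 * Real.log (x + 1) + (x - 1) * (x + 1)⁻¹) x := by
    have ha : HasDerivAt (fun x : ℝ => x - 1) 1 x := (hasDerivAt_id' x).sub_const 1
    have hb : HasDerivAt (fun x : ℝ => Real.log (x + 1)) (x + 1)⁻¹ x := by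
      have := (Real.hasDerivAt_log hx1).comp x ((hasDerivAt_id' x).add_const 1)
      exact this.congr_deriv (mul_one _)
    exact ha.mul hb
  have := h1.sub h2
  refine this.congr_deriv ?_
  have hlog : Real.log (x / (1 + x)) = Real.log x - Real.log (1 + x) :=
    Real.log_div (ne_of_gt hx0) (by linarith)
  rw [hlog]
  have : Real.log (x + 1) = Real.log (1 + x) := by ring_nf
  rw [this]
  field_simp
  ring

theorem s_deriv_pos_and_strict_mono :
    (∀ x : ℝ, 1 < x → 2 / (1 + x) + Real.log (x / (1 + x)) > 0) ∧
      StrictMonoOn (fun x : ℝ => x * Real.log x - (x - 1) * Real.log (x + 1))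
        (Set.Ioi 1) := by
  refine ⟨fun x hx => key_pos x hx, ?_⟩
  apply strictMonoOn_of_deriv_pos (convex_Ioi 1)
  · intro x hx
    exact ((hderiv x hx).differentiableAt).continuousAt.continuousWithinAt
  · intro x hx
    rw [interior_Ioi] at hx
    rw [(hderiv x hx).deriv]
    exact key_pos x hx
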